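/- Let R be a commutative ring and M a faithful R-module. If the clique number ω(G_M(R)) of the M-intersection graph is finite, then R is semilocal; more precisely, the number of maximal ideals of R is at most ω(G_M(R)) + 1. -/

import Mathlib

/-- The `M`-intersection graph of ideals of `R`: vertices are the nontrivial ideals of `R`,
and two distinct vertices `I`, `J` are adjacent iff `IM ∩ JM ≠ 0`. -/
def interGraph (R M : Type*) [CommRing R] [AddCommGroup M] [Module R M] :
    SimpleGraph {I : Ideal R // I ≠ ⊥ ∧ I ≠ ⊤} where
  Adj I J := I ≠ J ∧ (I.1 • ⊤ ⊓ J.1 • ⊤ : Submodule R M) ≠ ⊥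
  symm := ⟨fun I J h => ⟨h.1.symm, by rw [inf_comm]; exact h.2⟩⟩
  loopless := ⟨fun I h => h.1 rfl⟩

/-- If `M` is faithful and `IM ∩ JM = 0`, then `IJ = 0`. -/
lemma prod_eq_bot_of_inf_eq_bot {R M : Type*} [CommRing R] [AddCommGroup M] [Module R M]
    (hfaith : (⊤ : Submodule R M).annihilator = ⊥) {I J : Ideal R}
    (h : (I • ⊤ ⊓ J • ⊤ : Submodule R M) = ⊥) : I * J = ⊥ := by
  have h1 : ((I * J) • ⊤ : Submodule R M) = ⊥ := by
    refine le_bot_iff.mp ?_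
    rw [← h]
    refine le_inf ?_ ?_
    · rw [← Ideal.smul_eq_mul, Submodule.smul_assoc]
      exact Submodule.smul_mono le_rfl le_top
    · rw [mul_comm, ← Ideal.smul_eq_mul, Submodule.smul_assoc]
      exact Submodule.smul_mono le_rfl le_top
  rw [eq_bot_iff, ← hfaith]
  intro r hr
  rw [Submodule.mem_annihilator]
  intro n _
  have : r • n ∈ ((I * J) • ⊤ : Submodule R M) :=
    Submodule.smul_mem_smul hr Submodule.mem_top
  rw [h1] at this
  exact this

/-- A finite set of pairwise "adjacent" nontrivial ideals gives a lower bound on the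
clique number of the intersection graph. -/
lemma card_le_cliqueNum {R M : Type*} [CommRing R] [AddCommGroup M] [Module R M]
    (hfin : BddAbove {n : ℕ | ∃ s, (interGraph R M).IsNClique n s})
    (S : Finset (Ideal R)) (hS : ∀ I ∈ S, I ≠ ⊥ ∧ I ≠ ⊤)
    (hadj : ∀ I ∈ S, ∀ J ∈ S, I ≠ J → (I • ⊤ ⊓ J • ⊤ : Submodule R M) ≠ ⊥) :
    S.card ≤ (interGraph R M).cliqueNum := by
  classical
  let f : {I : Ideal R // I ∈ S} → {I : Ideal R // I ≠ ⊥ ∧ I ≠ ⊤} :=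
    fun x => ⟨x.1, hS x.1 x.2⟩
  have hfinj : Function.Injective f := by
    intro x y h
    have h2 : (f x).1 = (f y).1 := congrArg Subtype.val h
    exact Subtype.ext h2
  let s : Finset {I : Ideal R // I ≠ ⊥ ∧ I ≠ ⊤} := S.attach.map ⟨f, hfinj⟩
  have hclique : (interGraph R M).IsNClique S.card s := by
    constructor
    · intro x hx y hy hxy
      simp only [s, Finset.coe_map, Set.mem_image, Finset.mem_coe, Finset.mem_attach,
        true_and] at hx hy
      obtain ⟨⟨I, hI⟩, rfl⟩ := hx
      obtain ⟨⟨J, hJ⟩, rfl⟩ := hy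
      refine (⟨hxy, hadj I hI J hJ ?_⟩ : _ ∧ _)
      intro hIJ
      apply hxy
      simp only [f, Function.Embedding.coeFn_mk]
      exact Subtype.ext hIJ
    · simp [s]
  exact le_csSup hfin ⟨s, hclique⟩

/-- If `M` is a faithful module over a commutative ring `R` and the clique
number of `G_M(R)` is finite, then `R` is semilocal; more precisely,
`|Max(R)| ≤ ω(G_M(R)) + 1`. -/
theorem card_maximals_le_cliqueNum_add_one (R M : Type*) [CommRing R] [AddCommGroup M]
    [Module R M] [Nontrivial M]
    (hfaith : (⊤ : Submodule R M).annihilator = ⊥)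
    (hfin : BddAbove {n : ℕ | ∃ s, (interGraph R M).IsNClique n s}) :
    {I : Ideal R | I.IsMaximal}.encard ≤ (interGraph R M).cliqueNum + 1 := by
  classical
  by_contra hcon
  push_neg at hcon
  set ω := (interGraph R M).cliqueNum with hω
  have h2 : (↑(ω + 2) : ℕ∞) ≤ {I : Ideal R | I.IsMaximal}.encard := by
    have h1 : (↑ω + 1 : ℕ∞) < {I : Ideal R | I.IsMaximal}.encard := hcon
    have : ((↑ω + 1 : ℕ∞) + 1) ≤ {I : Ideal R | I.IsMaximal}.encard :=
      ENat.add_one_le_iff (by rw [← Nat.cast_one, ← Nat.cast_add]; exact ENat.coe_ne_top _) |>.mpr h1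
    calc (↑(ω + 2) : ℕ∞) = (↑ω + 1) + 1 := by push_cast; ring
      _ ≤ _ := this
  obtain ⟨t, hts, htc⟩ := Set.exists_subset_encard_eq h2
  have htfin : t.Finite := Set.finite_of_encard_eq_coe htc
  set T : Finset (Ideal R) := htfin.toFinset with hT
  have hTcard : T.card = ω + 2 := by
    have := htfin.encard_eq_coe_toFinset_card
    rw [htc] at this
    exact_mod_cast this.symm
  have hmax : ∀ I ∈ T, I.IsMaximal := fun I hI => hts (htfin.mem_toFinset.mp hI)
  have hne_top : ∀ I ∈ T, I ≠ ⊤ := fun I hI => (hmax I hI).ne_top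
  have hne_bot : ∀ I ∈ T, I ≠ ⊥ := by
    intro I hI hbot
    obtain ⟨J, hJ, hJI⟩ := Finset.exists_mem_ne (by omega : 1 < T.card) I
    have : I = J := (hmax I hI).eq_of_le (hne_top J hJ) (hbot ▸ bot_le)
    exact hJI this.symm
  -- key: if two distinct members of T are nonadjacent, then any third member equals one of them
  have hkey : ∀ I ∈ T, ∀ J ∈ T, I ≠ J → (I • ⊤ ⊓ J • ⊤ : Submodule R M) = ⊥ →
      ∀ K ∈ T, K = I ∨ K = J := by
    intro I hI J hJ _ hIJ K hK
    have hprod : I * J = ⊥ := prod_eq_bot_of_inf_eq_bot hfaith hIJ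
    have hle : I * J ≤ K := hprod ▸ bot_le
    rcases ((hmax K hK).isPrime.mul_le).mp hle with h | h
    · exact Or.inl ((hmax I hI).eq_of_le (hne_top K hK) h).symm
    · exact Or.inr ((hmax J hJ).eq_of_le (hne_top K hK) h).symm
  by_cases hA : ∀ I ∈ T, ∀ J ∈ T, I ≠ J → (I • ⊤ ⊓ J • ⊤ : Submodule R M) ≠ ⊥
  · have := card_le_cliqueNum hfin T (fun I hI => ⟨hne_bot I hI, hne_top I hI⟩) hA
    rw [hTcard] at this
    omega
  · push_neg at hA
    obtain ⟨a, ha, b, hb, hab, hzero⟩ := hA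
    set S : Finset (Ideal R) := T.erase a with hS
    have hScard : S.card = ω + 1 := by
      rw [hS, Finset.card_erase_of_mem ha, hTcard]
      omega
    have hSsub : ∀ I ∈ S, I ∈ T ∧ I ≠ a := by
      intro I hI
      exact ⟨Finset.mem_of_mem_erase hI, Finset.ne_of_mem_erase hI⟩
    have hSadj : ∀ I ∈ S, ∀ J ∈ S, I ≠ J → (I • ⊤ ⊓ J • ⊤ : Submodule R M) ≠ ⊥ := by
      intro I hI J hJ hIJ hzero'
      obtain ⟨hIT, hIa⟩ := hSsub I hI
      obtain ⟨hJT, hJa⟩ := hSsub J hJ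
      rcases hkey I hIT J hJT hIJ hzero' a ha with h | h
      · exact hIa h.symm
      · exact hJa h.symm
    have := card_le_cliqueNum hfin S
      (fun I hI => ⟨hne_bot I (hSsub I hI).1, hne_top I (hSsub I hI).1⟩) hSadj
    rw [hScard] at this
    omega
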